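/- Let W^1, …, W^{L−1} be matrices with W^ℓ ∈ ℝ^{N_{ℓ+1}×N_ℓ} and let w^L ∈ ℝ^{N_L} be a nonzero vector, satisfying the exact balance conditions W^ℓ W^{ℓ⊤} = W^{(ℓ+1)⊤} W^{ℓ+1} for ℓ = 1,…,L−2 and W^{L−1} W^{(L−1)⊤} = w^L w^{L⊤}. Then with u := ‖w^L‖₂ > 0 there exist unit vectors r_1 ∈ ℝ^{N_1}, …, r_L ∈ ℝ^{N_L} such that w^L = u r_L and W^ℓ = u r_{ℓ+1} r_ℓᵀ for every ℓ = 1,…,L−1; in particular every weight matrix is rank one with a common singular value u. -/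

import Mathlib

open Matrix

lemma vmv_trans {a b : ℕ} (v : Fin a → ℝ) (w : Fin b → ℝ) :
    (vecMulVec v w)ᵀ = vecMulVec w v := by
  ext i j; simp [vecMulVec_apply, mul_comm]

lemma vmv_mul_vmv {a b c : ℕ} (v : Fin a → ℝ) (w x : Fin b → ℝ) (y : Fin c → ℝ) :
    vecMulVec v w * vecMulVec x y = (∑ p, w p * x p) • vecMulVec v y := by
  ext i j
  simp only [mul_apply, vecMulVec_apply, Matrix.smul_apply, smul_eq_mul]
  rw [Finset.sum_mul]
  congr 1; ext p; ring

/-- Key rank-one factorization lemma. -/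
lemma keyFact {a b : ℕ} (M : Matrix (Fin a) (Fin b) ℝ) (v : Fin a → ℝ) {u : ℝ}
    (hu : 0 < u) (hv : ∑ p, v p ^ 2 = 1)
    (hM : M * Mᵀ = (u ^ 2) • vecMulVec v v) :
    (∑ i, ((∑ p, v p * M p i) / u) ^ 2 = 1) ∧
      M = u • vecMulVec v (fun i => (∑ p, v p * M p i) / u) := by
  have hvv : ∑ p, v p * v p = 1 := by simpa [sq] using hv
  set V := vecMulVec v v with hV
  have hVV : V * V = V := by rw [hV, vmv_mul_vmv, hvv, one_smul]
  have hVT : Vᵀ = V := by rw [hV, vmv_trans]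
  have e2 : M * (Mᵀ * V) = (u ^ 2) • V := by
    rw [← Matrix.mul_assoc, hM, Matrix.smul_mul, hVV]
  have e3 : V * M * Mᵀ = (u ^ 2) • V := by
    rw [Matrix.mul_assoc, hM, Matrix.mul_smul, hVV]
  have e4 : V * M * (Mᵀ * V) = (u ^ 2) • V := by
    rw [Matrix.mul_assoc, e2, Matrix.mul_smul, hVV]
  have hE : (M - V * M) * (M - V * M)ᵀ = 0 := by
    rw [transpose_sub, transpose_mul, hVT, Matrix.sub_mul, Matrix.mul_sub, Matrix.mul_sub,
      hM, e2, e3, e4]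
    simp
  have hE0 : M = V * M := by
    have hz : M - V * M = 0 := by
      ext i j
      have h0 : ∑ k, (M - V * M) i k * (M - V * M) i k = 0 := by
        have := congrFun (congrFun hE i) i
        simpa only [mul_apply, transpose_apply, Matrix.zero_apply] using this
      have := (Finset.sum_eq_zero_iff_of_nonneg
        (fun k _ => mul_self_nonneg ((M - V * M) i k))).mp h0 j (Finset.mem_univ j)
      simpa using mul_self_eq_zero.mp this
    exact sub_eq_zero.mp hz
  have hMM : ∀ p q, ∑ i, M p i * M q i = u ^ 2 * (v p * v q) := by
    intro p q
    have := congrFun (congrFun hM p) q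
    simpa [mul_apply, transpose_apply, vecMulVec_apply, Matrix.smul_apply, smul_eq_mul, hV]
      using this
  constructor
  · have hsum : ∑ i, (∑ p, v p * M p i) ^ 2 = u ^ 2 := by
      have step : ∀ i, (∑ p, v p * M p i) ^ 2
          = ∑ p, ∑ q, (v p * v q) * (M p i * M q i) := by
        intro i
        rw [sq, Finset.sum_mul_sum]
        refine Finset.sum_congr rfl fun p _ => Finset.sum_congr rfl fun q _ => ?_
        ring
      calc ∑ i, (∑ p, v p * M p i) ^ 2
          = ∑ i, ∑ p, ∑ q, (v p * v q) * (M p i * M q i) :=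
            Finset.sum_congr rfl fun i _ => step i
        _ = ∑ p, ∑ q, (v p * v q) * ∑ i, M p i * M q i := by
            rw [Finset.sum_comm]
            refine Finset.sum_congr rfl fun p _ => ?_
            rw [Finset.sum_comm]
            refine Finset.sum_congr rfl fun q _ => ?_
            rw [Finset.mul_sum]
        _ = ∑ p, ∑ q, (u ^ 2) * (v p ^ 2 * v q ^ 2) := by
            refine Finset.sum_congr rfl fun p _ => Finset.sum_congr rfl fun q _ => ?_
            rw [hMM]; ring
        _ = u ^ 2 * ((∑ p, v p ^ 2) * (∑ q, v q ^ 2)) := by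
            rw [Finset.sum_mul_sum, Finset.mul_sum]
            refine Finset.sum_congr rfl fun p _ => by rw [Finset.mul_sum]
        _ = u ^ 2 := by rw [hv]; ring
    have : ∑ i, ((∑ p, v p * M p i) / u) ^ 2 = (∑ i, (∑ p, v p * M p i) ^ 2) / u ^ 2 := by
      rw [Finset.sum_div]
      exact Finset.sum_congr rfl fun i _ => by rw [div_pow]
    rw [this, hsum, div_self (by positivity)]
  · ext i j
    have h1 : (V * M) i j = v i * ∑ p, v p * M p j := by
      simp only [mul_apply, hV, vecMulVec_apply]
      rw [Finset.mul_sum]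
      exact Finset.sum_congr rfl fun p _ => by ring
    have h2 := congrFun (congrFun hE0 i) j
    rw [h1] at h2
    simp only [Matrix.smul_apply, vecMulVec_apply, smul_eq_mul]
    rw [h2]
    field_simp


/-- The Euclidean (ℓ²) norm of a vector. -/
noncomputable def euclNorm {m : ℕ} (v : Fin m → ℝ) : ℝ :=
  Real.sqrt (∑ i, v i ^ 2)

/-- A deep linear network `f(x) = w^{L⊤} W^{L-1} ⋯ W^1 x` is encoded as a chain
of `L` matrices `A 0, …, A (L-1)` with widths `n 0, …, n L` and `n L = 1`, the last matrix
being the row vector `w^{L⊤}`. If the exact balance conditions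
`A ℓ (A ℓ)ᵀ = (A (ℓ+1))ᵀ A (ℓ+1)` hold for all adjacent pairs (this includes the condition
`W^{L-1} W^{(L-1)⊤} = w^L w^{L⊤}`) and the top vector `w^L` is nonzero, then with
`u := ‖w^L‖₂ > 0` there exist unit vectors `r k ∈ ℝ^{n k}` such that (with the top unit
"vector" normalized to `1`, i.e. `w^L = u r_L`) every weight matrix is the rank-one matrix
`A ℓ = u r_{ℓ+1} r_ℓᵀ` with common singular value `u`. -/
theorem stmt9 {L : ℕ} (hL : 0 < L) (n : ℕ → ℕ) (htop : n L = 1)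
    (A : ∀ ℓ : Fin L, Matrix (Fin (n (ℓ + 1))) (Fin (n ℓ)) ℝ)
    (hbal : ∀ (ℓ : ℕ) (hℓ : ℓ + 1 < L),
      A ⟨ℓ, Nat.lt_of_succ_lt hℓ⟩ * (A ⟨ℓ, Nat.lt_of_succ_lt hℓ⟩)ᵀ
        = (A ⟨ℓ + 1, hℓ⟩)ᵀ * A ⟨ℓ + 1, hℓ⟩)
    (hw : A ⟨L - 1, Nat.sub_lt hL one_pos⟩ ≠ 0)
    (u : ℝ)
    (hu : u = Real.sqrt (∑ i, ∑ j, (A ⟨L - 1, Nat.sub_lt hL one_pos⟩ i j) ^ 2)) :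
    0 < u ∧
    ∃ r : (k : ℕ) → Fin (n k) → ℝ,
      (∀ k ≤ L, euclNorm (r k) = 1) ∧
      (∀ i, r L i = 1) ∧
      (∀ ℓ : Fin L, A ℓ = u • vecMulVec (r (ℓ + 1)) (r ℓ)) := by
  classical
  -- positivity of u
  have hex : ∃ i j, A ⟨L - 1, Nat.sub_lt hL one_pos⟩ i j ≠ 0 := by
    by_contra h
    push_neg at h
    exact hw (by ext i j; simpa using h i j)
  obtain ⟨i0, j0, hij0⟩ := hex
  have hS : 0 < ∑ i, ∑ j, (A ⟨L - 1, Nat.sub_lt hL one_pos⟩ i j) ^ 2 := by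
    have hle := Finset.single_le_sum
      (f := fun j => (A ⟨L - 1, Nat.sub_lt hL one_pos⟩ i0 j) ^ 2)
      (fun j _ => sq_nonneg _) (Finset.mem_univ j0)
    have hpos : 0 < (A ⟨L - 1, Nat.sub_lt hL one_pos⟩ i0 j0) ^ 2 :=
      lt_of_le_of_ne (sq_nonneg _) (Ne.symm (pow_ne_zero 2 hij0))
    have hout := Finset.single_le_sum
      (f := fun i => ∑ j, (A ⟨L - 1, Nat.sub_lt hL one_pos⟩ i j) ^ 2)
      (fun i _ => Finset.sum_nonneg fun j _ => sq_nonneg _) (Finset.mem_univ i0)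
    dsimp only at hle hout
    linarith
  have hupos : 0 < u := by rw [hu]; exact Real.sqrt_pos.mpr hS
  have hu2 : u ^ 2 = ∑ i, ∑ j, (A ⟨L - 1, Nat.sub_lt hL one_pos⟩ i j) ^ 2 := by
    rw [hu]; exact Real.sq_sqrt hS.le
  -- the top-layer key identity, stated with a generalized index and vector
  have topkey : ∀ (lv : ℕ) (h : lv < L) (v : Fin (n (lv + 1)) → ℝ), lv + 1 = L →
      (∀ i, v i = 1) →
      A ⟨lv, h⟩ * (A ⟨lv, h⟩)ᵀ = (u ^ 2) • vecMulVec v v := by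
    intro lv h v hlv hints
    have hlv' : lv = L - 1 := by omega
    subst hlv'
    have hu2' : u ^ 2 = ∑ i, ∑ jj, (A ⟨L - 1, h⟩ i jj) ^ 2 := hu2
    have hn1 : n (((⟨L - 1, h⟩ : Fin L) : ℕ) + 1) = 1 := by
      show n (L - 1 + 1) = 1
      have hE : L - 1 + 1 = L := by omega
      rw [hE, htop]
    ext i i'
    have hi := i.isLt
    have hi' := i'.isLt
    obtain rfl : i = i' := Fin.ext (by omega)
    have hsingle : ∀ f : Fin (n (((⟨L - 1, h⟩ : Fin L) : ℕ) + 1)) → ℝ,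
        ∑ x, f x = f i := by
      intro f
      calc ∑ x, f x = ∑ _x : Fin (n (((⟨L - 1, h⟩ : Fin L) : ℕ) + 1)), f i :=
            Finset.sum_congr rfl fun x _ => by
              have hx := x.isLt
              congr 1
              exact Fin.ext (by omega)
        _ = f i := by simp [Finset.sum_const, Finset.card_univ, hn1]
    simp only [mul_apply, transpose_apply, Matrix.smul_apply, vecMulVec_apply, smul_eq_mul]
    rw [hints i, mul_one, mul_one, hu2',
      hsingle (fun i' => ∑ jj, (A ⟨L - 1, h⟩ i' jj) ^ 2)]
    simp [sq]
  -- downward induction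
  have main : ∀ j, j ≤ L → ∃ r : (k : ℕ) → Fin (n k) → ℝ,
      (∀ k, L - j ≤ k → k ≤ L → euclNorm (r k) = 1) ∧
      (∀ i, r L i = 1) ∧
      (∀ ℓ : Fin L, L - j ≤ (ℓ : ℕ) → A ℓ = u • vecMulVec (r (↑ℓ + 1)) (r ↑ℓ)) := by
    intro j
    induction j with
    | zero =>
      intro _
      refine ⟨fun k => fun _ => 1, ?_, fun i => rfl, ?_⟩
      · intro k hk1 hk2
        have hkL : k = L := by omega
        subst hkL
        simp [euclNorm, htop]
      · intro ℓ hℓ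
        exact absurd ℓ.isLt (by omega)
    | succ j IH =>
      intro hj1
      obtain ⟨r, h1, h2, h3⟩ := IH (by omega)
      set m := L - (j + 1) with hm
      have hmL : m < L := by omega
      have hm1 : m + 1 = L - j := by omega
      have normsum : ∀ k, L - j ≤ k → k ≤ L → ∑ p, r k p ^ 2 = 1 := by
        intro k hk1 hk2
        have := h1 k hk1 hk2
        unfold euclNorm at this
        exact Real.sqrt_eq_one.mp this
      have hvunit : ∑ p, r (m + 1) p ^ 2 = 1 := normsum (m + 1) (by omega) (by omega)
      have hkey : A ⟨m, hmL⟩ * (A ⟨m, hmL⟩)ᵀ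
          = (u ^ 2) • vecMulVec (r (m + 1)) (r (m + 1)) := by
        rcases Nat.lt_or_ge (m + 1) L with hlt | hge
        · have hv2 : ∑ p, r (m + 1 + 1) p * r (m + 1 + 1) p = 1 := by
            have := normsum (m + 1 + 1) (by omega) (by omega)
            simpa [sq] using this
          calc A ⟨m, hmL⟩ * (A ⟨m, hmL⟩)ᵀ
              = (A ⟨m + 1, hlt⟩)ᵀ * A ⟨m + 1, hlt⟩ := hbal m hlt
            _ = (u • vecMulVec (r (m + 1 + 1)) (r (m + 1)))ᵀ
                  * (u • vecMulVec (r (m + 1 + 1)) (r (m + 1))) := by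
                rw [← h3 ⟨m + 1, hlt⟩ (by simp; omega)]
            _ = (u ^ 2) • vecMulVec (r (m + 1)) (r (m + 1)) := by
                rw [transpose_smul, vmv_trans, Matrix.smul_mul, Matrix.mul_smul,
                  vmv_mul_vmv, hv2, one_smul, smul_smul, ← sq]
        · have hmEq : m + 1 = L := by omega
          have hints : ∀ i : Fin (n (m + 1)), r (m + 1) i = 1 := by
            have h2' : ∀ (k : ℕ), k = L → ∀ i : Fin (n k), r k i = 1 := by
              intro k hk
              subst hk
              exact h2
            exact h2' (m + 1) hmEq
          exact topkey m hmL (r (m + 1)) hmEq hints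
      obtain ⟨hwnorm, hfac⟩ := keyFact (A ⟨m, hmL⟩) (r (m + 1)) hupos hvunit hkey
      set w : Fin (n m) → ℝ := fun i => (∑ p, r (m + 1) p * A ⟨m, hmL⟩ p i) / u
        with hwdef
      set r' : (k : ℕ) → Fin (n k) → ℝ := fun k =>
        if h : k = m then cast (show (Fin (n m) → ℝ) = (Fin (n k) → ℝ) by rw [h]) w
        else r k with hr'def
      have hr'ne : ∀ k, k ≠ m → r' k = r k := by
        intro k hk
        simp only [hr'def]
        rw [dif_neg hk]
      have hr'm : r' m = w := by
        simp only [hr'def]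
        rw [dif_pos trivial]
        exact cast_eq _ _
      have hwnorm' : euclNorm w = 1 := by
        unfold euclNorm
        exact Real.sqrt_eq_one.mpr hwnorm
      refine ⟨r', ?_, ?_, ?_⟩
      · intro k hk1 hk2
        by_cases hkm : k = m
        · subst hkm
          rw [hr'm]
          exact hwnorm'
        · rw [hr'ne k hkm]
          exact h1 k (by omega) hk2
      · intro i
        rw [hr'ne L (by omega)]
        exact h2 i
      · intro ℓ hℓ
        by_cases hlm : (ℓ : ℕ) = m
        · have hℓeq : ℓ = ⟨m, hmL⟩ := Fin.ext hlm
          subst hℓeq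
          show A ⟨m, hmL⟩ = u • vecMulVec (r' (m + 1)) (r' m)
          rw [hr'ne (m + 1) (by omega), hr'm]
          exact hfac
        · rw [hr'ne (↑ℓ + 1) (by omega), hr'ne ↑ℓ hlm]
          exact h3 ℓ (by omega)
  obtain ⟨r, h1, h2, h3⟩ := main L le_rfl
  exact ⟨hupos, r, fun k hk => h1 k (by omega) hk, h2, fun ℓ => h3 ℓ (by omega)⟩
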